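/- Let W be the unique formal power series over ℚ with constant coefficient 1 satisfying W² = 1 − 6z² + 5z⁴, and set P = (1 + z² + W)/2, a formal power series with constant coefficient 1 (hence invertible). A decorated (partial) Dyck path is a word over the alphabet {U, D, R}, where U contributes +1 to the height and D (black down-step) and R (red down-step) each contribute −1, such that every prefix has nonnegative height and the factors UR and RU do not occur. Then for every j ≥ 0, the generating function Σ_{n≥0} (number of decorated partial Dyck paths of length n with final height j) z^n equals z^j (3 − 3z² − W) / (2 P^{j+1}). -/

import Mathlib

noncomputable section

/-- A step of a decorated Dyck path: up, black down, or red down. -/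
inductive DecStep : Type
  | up : DecStep
  | down : DecStep
  | red : DecStep

/-- Height change of a step: `U ↦ +1`, `D ↦ -1`, `R ↦ -1`. -/
def DecStep.wt : DecStep → ℤ
  | .up => 1
  | .down => -1
  | .red => -1

/-- Total height change of a word of steps. -/
def decHeight (p : List DecStep) : ℤ := (p.map DecStep.wt).sum

/-- A decorated (partial) Dyck path: every prefix has nonnegative height and the
factors `UR` and `RU` do not occur. -/
def IsDecorated (p : List DecStep) : Prop :=
  (∀ q, q <+: p → 0 ≤ decHeight q) ∧
  ¬ [DecStep.up, DecStep.red] <:+: p ∧ ¬ [DecStep.red, DecStep.up] <:+: p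

/-- The number of decorated partial Dyck paths of length `n` with final height `j`. -/
def decCount (n j : ℕ) : ℕ :=
  Nat.card {p : List DecStep // p.length = n ∧ IsDecorated p ∧ decHeight p = (j : ℤ)}

-- ===== auxiliary combinatorics =====

deriving instance DecidableEq for DecStep

instance : Fintype DecStep :=
  ⟨⟨{DecStep.up, DecStep.down, DecStep.red}, by decide⟩, fun x => by cases x <;> decide⟩

namespace SkewAux

open DecStep

def Good (q : List DecStep) : Prop :=
  (∀ r, r <:+ q → 0 ≤ decHeight r) ∧
  ¬ [DecStep.up, DecStep.red] <:+: q ∧ ¬ [DecStep.red, DecStep.up] <:+: q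

lemma decHeight_nil : decHeight [] = 0 := rfl

lemma decHeight_cons (s : DecStep) (t : List DecStep) :
    decHeight (s :: t) = s.wt + decHeight t := by simp [decHeight]

lemma decHeight_reverse (q : List DecStep) : decHeight q.reverse = decHeight q := by
  simp [decHeight, List.sum_reverse]

lemma good_nonneg {q : List DecStep} (h : Good q) : 0 ≤ decHeight q :=
  h.1 q (List.suffix_refl q)

lemma good_nil : Good [] := by
  refine ⟨fun r hr => ?_, ?_, ?_⟩
  · rw [List.suffix_nil.1 hr]; simp [decHeight]
  · simp [List.infix_nil]
  · simp [List.infix_nil]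

lemma singleton_prefix_iff (b : DecStep) (t : List DecStep) :
    [b] <+: t ↔ t.head? = some b := by
  cases t with
  | nil => simp
  | cons a t => simp [List.cons_prefix_cons, eq_comm]

lemma pair_infix_cons (a b s : DecStep) (t : List DecStep) :
    [a, b] <:+: s :: t ↔ (s = a ∧ t.head? = some b) ∨ [a, b] <:+: t := by
  rw [List.infix_cons_iff, List.cons_prefix_cons, singleton_prefix_iff]
  constructor
  · rintro (⟨h1, h2⟩ | h)
    · exact Or.inl ⟨h1.symm, h2⟩
    · exact Or.inr h
  · rintro (⟨h1, h2⟩ | h)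
    · exact Or.inl ⟨h1.symm, h2⟩
    · exact Or.inr h

lemma good_cons (s : DecStep) (t : List DecStep) :
    Good (s :: t) ↔ Good t ∧ 0 ≤ decHeight (s :: t) ∧
      ¬(s = DecStep.up ∧ t.head? = some DecStep.red) ∧
      ¬(s = DecStep.red ∧ t.head? = some DecStep.up) := by
  constructor
  · rintro ⟨h1, h2, h3⟩
    refine ⟨⟨fun r hr => h1 r (hr.trans (List.suffix_cons s t)),
      fun h => h2 ((pair_infix_cons _ _ _ _).2 (Or.inr h)),
      fun h => h3 ((pair_infix_cons _ _ _ _).2 (Or.inr h))⟩,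
      h1 _ (List.suffix_refl _),
      fun h => h2 ((pair_infix_cons _ _ _ _).2 (Or.inl h)),
      fun h => h3 ((pair_infix_cons _ _ _ _).2 (Or.inl h))⟩
  · rintro ⟨⟨h1, h2, h3⟩, hh, hur, hru⟩
    refine ⟨fun r hr => ?_, fun hin => ?_, fun hin => ?_⟩
    · rcases List.suffix_cons_iff.1 hr with rfl | hr'
      · exact hh
      · exact h1 r hr'
    · rcases (pair_infix_cons _ _ _ _).1 hin with h | h
      · exact hur h
      · exact h2 h
    · rcases (pair_infix_cons _ _ _ _).1 hin with h | h
      · exact hru h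
      · exact h3 h

/-- Words counted by `b`. -/
def Bs (n k : ℕ) : Set (List DecStep) :=
  {q | q.length = n ∧ Good q ∧ decHeight q = (k : ℤ)}

def As (n k : ℕ) : Set (List DecStep) :=
  {q | q ∈ Bs n k ∧ q.head? ≠ some DecStep.red}

def Cs (n k : ℕ) : Set (List DecStep) :=
  {q | q ∈ Bs n k ∧ q.head? ≠ some DecStep.up}

def Hu (n k : ℕ) : Set (List DecStep) := {q | q ∈ Bs n k ∧ q.head? = some DecStep.up}
def Hd (n k : ℕ) : Set (List DecStep) := {q | q ∈ Bs n k ∧ q.head? = some DecStep.down}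
def Hr (n k : ℕ) : Set (List DecStep) := {q | q ∈ Bs n k ∧ q.head? = some DecStep.red}

lemma finB (n k : ℕ) : (Bs n k).Finite :=
  (List.finite_length_eq DecStep n).subset (fun _ hq => hq.1)

lemma finA (n k : ℕ) : (As n k).Finite := (finB n k).subset (fun _ hq => hq.1)
lemma finC (n k : ℕ) : (Cs n k).Finite := (finB n k).subset (fun _ hq => hq.1)
lemma finHu (n k : ℕ) : (Hu n k).Finite := (finB n k).subset (fun _ hq => hq.1)
lemma finHd (n k : ℕ) : (Hd n k).Finite := (finB n k).subset (fun _ hq => hq.1)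
lemma finHr (n k : ℕ) : (Hr n k).Finite := (finB n k).subset (fun _ hq => hq.1)

lemma Hu_zero (n : ℕ) : Hu n 0 = ∅ := by
  ext q
  simp only [Hu, Bs, Set.mem_setOf_eq, Set.mem_empty_iff_false, iff_false, not_and]
  rintro ⟨hl, hg, hh⟩ hhd
  cases q with
  | nil => simp at hhd
  | cons s t =>
    obtain rfl : s = DecStep.up := by simpa using hhd
    rw [good_cons] at hg
    have h0 := good_nonneg hg.1
    rw [decHeight_cons] at hh
    simp [DecStep.wt] at hh
    omega

lemma Hu_succ (n k : ℕ) : Hu (n + 1) (k + 1) = (List.cons DecStep.up) '' (As n k) := by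
  ext q
  constructor
  · rintro ⟨⟨hl, hg, hh⟩, hhd⟩
    cases q with
    | nil => simp at hhd
    | cons s t =>
      obtain rfl : s = DecStep.up := by simpa using hhd
      rw [good_cons] at hg
      obtain ⟨hgt, _, hur, _⟩ := hg
      rw [decHeight_cons] at hh
      refine ⟨t, ⟨⟨by simpa using hl, hgt, ?_⟩, fun hcon => hur ⟨rfl, hcon⟩⟩, rfl⟩
      · simp only [DecStep.wt] at hh; push_cast at hh ⊢; omega
  · rintro ⟨t, ⟨⟨hl, hg, hh⟩, hhd⟩, rfl⟩
    refine ⟨⟨by simp [hl], ?_, ?_⟩, rfl⟩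
    · rw [good_cons]
      refine ⟨hg, ?_, fun h => hhd h.2, fun h => by simp at h⟩
      rw [decHeight_cons, hh]
      simp [DecStep.wt]
      positivity
    · rw [decHeight_cons, hh]; simp [DecStep.wt]; push_cast; ring

lemma Hd_succ (n k : ℕ) : Hd (n + 1) k = (List.cons DecStep.down) '' (Bs n (k + 1)) := by
  ext q
  constructor
  · rintro ⟨⟨hl, hg, hh⟩, hhd⟩
    cases q with
    | nil => simp at hhd
    | cons s t =>
      obtain rfl : s = DecStep.down := by simpa using hhd
      rw [good_cons] at hg
      rw [decHeight_cons] at hh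
      refine ⟨t, ⟨by simpa using hl, hg.1, ?_⟩, rfl⟩
      simp only [DecStep.wt] at hh; push_cast at hh ⊢; omega
  · rintro ⟨t, ⟨hl, hg, hh⟩, rfl⟩
    refine ⟨⟨by simp [hl], ?_, ?_⟩, rfl⟩
    · rw [good_cons]
      refine ⟨hg, ?_, fun h => by simp at h, fun h => by simp at h⟩
      rw [decHeight_cons, hh]
      simp [DecStep.wt]
    · rw [decHeight_cons, hh]; simp [DecStep.wt]

lemma Hr_succ (n k : ℕ) : Hr (n + 1) k = (List.cons DecStep.red) '' (Cs n (k + 1)) := by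
  ext q
  constructor
  · rintro ⟨⟨hl, hg, hh⟩, hhd⟩
    cases q with
    | nil => simp at hhd
    | cons s t =>
      obtain rfl : s = DecStep.red := by simpa using hhd
      rw [good_cons] at hg
      obtain ⟨hgt, _, _, hru⟩ := hg
      rw [decHeight_cons] at hh
      refine ⟨t, ⟨⟨by simpa using hl, hgt, ?_⟩, fun hcon => hru ⟨rfl, hcon⟩⟩, rfl⟩
      simp only [DecStep.wt] at hh; push_cast at hh ⊢; omega
  · rintro ⟨t, ⟨⟨hl, hg, hh⟩, hhd⟩, rfl⟩
    refine ⟨⟨by simp [hl], ?_, ?_⟩, rfl⟩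
    · rw [good_cons]
      refine ⟨hg, ?_, fun h => by simp at h, fun h => hhd h.2⟩
      rw [decHeight_cons, hh]
      simp [DecStep.wt]
    · rw [decHeight_cons, hh]; simp [DecStep.wt]

lemma Bs_split (n k : ℕ) : Bs (n + 1) k = Hu (n + 1) k ∪ Hd (n + 1) k ∪ Hr (n + 1) k := by
  ext q
  cases q with
  | nil =>
    simp [Bs, Hu, Hd, Hr]
  | cons s t =>
    simp only [Hu, Hd, Hr, Set.mem_union, Set.mem_setOf_eq, List.head?_cons]
    cases s <;> simp

lemma As_split (n k : ℕ) : As (n + 1) k = Hu (n + 1) k ∪ Hd (n + 1) k := by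
  ext q
  cases q with
  | nil => simp [As, Bs, Hu, Hd]
  | cons s t =>
    simp only [As, Hu, Hd, Set.mem_union, Set.mem_setOf_eq, List.head?_cons]
    cases s <;> simp

lemma Cs_split (n k : ℕ) : Cs (n + 1) k = Hd (n + 1) k ∪ Hr (n + 1) k := by
  ext q
  cases q with
  | nil => simp [Cs, Bs, Hd, Hr]
  | cons s t =>
    simp only [Cs, Hd, Hr, Set.mem_union, Set.mem_setOf_eq, List.head?_cons]
    cases s <;> simp

lemma disj_ud (n k : ℕ) : Disjoint (Hu n k) (Hd n k) := by
  rw [Set.disjoint_left]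
  rintro q ⟨_, h1⟩ ⟨_, h2⟩
  rw [h1] at h2; simp at h2

lemma disj_udr (n k : ℕ) : Disjoint (Hu n k ∪ Hd n k) (Hr n k) := by
  rw [Set.disjoint_left]
  rintro q (⟨_, h1⟩ | ⟨_, h1⟩) ⟨_, h2⟩ <;> (rw [h1] at h2; simp at h2)

lemma disj_dr (n k : ℕ) : Disjoint (Hd n k) (Hr n k) := by
  rw [Set.disjoint_left]
  rintro q ⟨_, h1⟩ ⟨_, h2⟩
  rw [h1] at h2; simp at h2

def aN (n k : ℕ) : ℕ := (As n k).ncard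
def bN (n k : ℕ) : ℕ := (Bs n k).ncard
def cN (n k : ℕ) : ℕ := (Cs n k).ncard

lemma cons_inj (s : DecStep) : Function.Injective (List.cons s) := by
  intro a b h
  injection h

lemma hu_card (n k : ℕ) : (Hu (n + 1) (k + 1)).ncard = aN n k := by
  rw [Hu_succ, Set.ncard_image_of_injective _ (cons_inj _)]; rfl

lemma hd_card (n k : ℕ) : (Hd (n + 1) k).ncard = bN n (k + 1) := by
  rw [Hd_succ, Set.ncard_image_of_injective _ (cons_inj _)]; rfl

lemma hr_card (n k : ℕ) : (Hr (n + 1) k).ncard = cN n (k + 1) := by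
  rw [Hr_succ, Set.ncard_image_of_injective _ (cons_inj _)]; rfl

lemma bN_succ (n k : ℕ) : bN (n + 1) (k + 1) = aN n k + bN n (k + 2) + cN n (k + 2) := by
  unfold bN
  rw [Bs_split, Set.ncard_union_eq (disj_udr _ _) ((finHu _ _).union (finHd _ _)) (finHr _ _),
    Set.ncard_union_eq (disj_ud _ _) (finHu _ _) (finHd _ _),
    hu_card, hd_card, hr_card]
  rfl

lemma bN_succ0 (n : ℕ) : bN (n + 1) 0 = bN n 1 + cN n 1 := by
  unfold bN
  rw [Bs_split, Set.ncard_union_eq (disj_udr _ _) ((finHu _ _).union (finHd _ _)) (finHr _ _),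
    Set.ncard_union_eq (disj_ud _ _) (finHu _ _) (finHd _ _),
    Hu_zero, hd_card, hr_card]
  simp [bN, cN]

lemma aN_succ (n k : ℕ) : aN (n + 1) (k + 1) = aN n k + bN n (k + 2) := by
  unfold aN
  rw [As_split, Set.ncard_union_eq (disj_ud _ _) (finHu _ _) (finHd _ _), hu_card, hd_card]
  rfl

lemma aN_succ0 (n : ℕ) : aN (n + 1) 0 = bN n 1 := by
  unfold aN
  rw [As_split, Set.ncard_union_eq (disj_ud _ _) (finHu _ _) (finHd _ _), Hu_zero, hd_card]
  simp [bN]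

lemma cN_succ (n k : ℕ) : cN (n + 1) k = bN n (k + 1) + cN n (k + 1) := by
  unfold cN
  rw [Cs_split, Set.ncard_union_eq (disj_dr _ _) (finHd _ _) (finHr _ _), hd_card, hr_card]
  rfl

lemma Bs_zero (k : ℕ) : Bs 0 k = if k = 0 then {([] : List DecStep)} else ∅ := by
  ext q
  by_cases hk : k = 0 <;>
    simp [Bs, hk, List.length_eq_zero_iff, good_nil, decHeight_nil] <;>
    rintro rfl <;> simp [good_nil, decHeight_nil]
  · omega

lemma As_zero (k : ℕ) : As 0 k = Bs 0 k := by
  ext q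
  simp only [As, Set.mem_setOf_eq, and_iff_left_iff_imp]
  intro hq
  have : q = [] := List.length_eq_zero_iff.1 hq.1
  subst this; simp

lemma Cs_zero (k : ℕ) : Cs 0 k = Bs 0 k := by
  ext q
  simp only [Cs, Set.mem_setOf_eq, and_iff_left_iff_imp]
  intro hq
  have : q = [] := List.length_eq_zero_iff.1 hq.1
  subst this; simp

lemma bN_zero (k : ℕ) : bN 0 k = if k = 0 then 1 else 0 := by
  unfold bN
  rw [Bs_zero]
  by_cases hk : k = 0 <;> simp [hk]

lemma aN_zero (k : ℕ) : aN 0 k = if k = 0 then 1 else 0 := by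
  unfold aN; rw [As_zero, ← bN_zero]; rfl

lemma cN_zero (k : ℕ) : cN 0 k = if k = 0 then 1 else 0 := by
  unfold cN; rw [Cs_zero, ← bN_zero]; rfl

lemma isDecorated_iff_good_reverse (p : List DecStep) : IsDecorated p ↔ Good p.reverse := by
  unfold IsDecorated Good
  constructor
  · rintro ⟨h1, h2, h3⟩
    refine ⟨fun r hr => ?_, fun h => h3 ?_, fun h => h2 ?_⟩
    · have : r.reverse <+: p := by
        rw [← List.reverse_suffix]; simpa using hr
      have := h1 _ this
      rwa [decHeight_reverse] at this
    · have : ([DecStep.red, DecStep.up] : List DecStep).reverse <:+: p.reverse := by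
        simpa using h
      rwa [List.reverse_infix] at this
    · have : ([DecStep.up, DecStep.red] : List DecStep).reverse <:+: p.reverse := by
        simpa using h
      rwa [List.reverse_infix] at this
  · rintro ⟨h1, h2, h3⟩
    refine ⟨fun r hr => ?_, fun h => h3 ?_, fun h => h2 ?_⟩
    · have : r.reverse <:+ p.reverse := by
        rw [List.reverse_suffix]; exact hr
      have := h1 _ this
      rwa [decHeight_reverse] at this
    · have : ([DecStep.up, DecStep.red] : List DecStep).reverse <:+: p.reverse :=
        List.reverse_infix.2 h
      simpa using this
    · have : ([DecStep.red, DecStep.up] : List DecStep).reverse <:+: p.reverse :=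
        List.reverse_infix.2 h
      simpa using this

lemma decCount_eq (n j : ℕ) : decCount n j = bN n j := by
  unfold decCount bN
  rw [← Nat.card_coe_set_eq]
  apply Nat.card_congr
  refine ⟨fun p => ⟨p.1.reverse, ?_⟩, fun q => ⟨q.1.reverse, ?_⟩, ?_, ?_⟩
  · obtain ⟨hl, hd, hh⟩ := p.2
    exact ⟨by simpa using hl, (isDecorated_iff_good_reverse _).1 hd, by rwa [decHeight_reverse]⟩
  · obtain ⟨hl, hg, hh⟩ := q.2
    refine ⟨by simpa using hl, ?_, by rwa [decHeight_reverse]⟩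
    rw [isDecorated_iff_good_reverse]
    simpa using hg
  · intro p; ext : 1; simp
  · intro q; ext : 1; simp

end SkewAux



namespace SkewAux

open PowerSeries

local notation "XX" => (PowerSeries.X : PowerSeries ℚ)

/-- Uniqueness of solutions of the functional-equation system. -/
lemma system_unique (A B C A' B' C' : ℕ → PowerSeries ℚ)
    (hA0 : A 0 = 1 + XX * B 1)
    (hA : ∀ k, A (k + 1) = XX * (A k + B (k + 2)))
    (hB0 : B 0 = 1 + XX * (B 1 + C 1))
    (hB : ∀ k, B (k + 1) = XX * (A k + B (k + 2) + C (k + 2)))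
    (hC0 : C 0 = 1 + XX * (B 1 + C 1))
    (hC : ∀ k, C (k + 1) = XX * (B (k + 2) + C (k + 2)))
    (hA0' : A' 0 = 1 + XX * B' 1)
    (hA' : ∀ k, A' (k + 1) = XX * (A' k + B' (k + 2)))
    (hB0' : B' 0 = 1 + XX * (B' 1 + C' 1))
    (hB' : ∀ k, B' (k + 1) = XX * (A' k + B' (k + 2) + C' (k + 2)))
    (hC0' : C' 0 = 1 + XX * (B' 1 + C' 1))
    (hC' : ∀ k, C' (k + 1) = XX * (B' (k + 2) + C' (k + 2))) :
    ∀ k, B k = B' k := by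
  have key : ∀ n k, coeff n (A k) = coeff n (A' k) ∧
      coeff n (B k) = coeff n (B' k) ∧ coeff n (C k) = coeff n (C' k) := by
    intro n
    induction n with
    | zero =>
      intro k
      match k with
      | 0 =>
        rw [hA0, hA0', hB0, hB0', hC0, hC0']
        simp [coeff_zero_eq_constantCoeff]
      | k + 1 =>
        rw [hA k, hA' k, hB k, hB' k, hC k, hC' k]
        simp [coeff_zero_eq_constantCoeff]
    | succ n ih =>
      intro k
      match k with
      | 0 =>
        rw [hA0, hA0', hB0, hB0', hC0, hC0']
        simp only [map_add, coeff_succ_X_mul]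
        rw [(ih 1).2.1, (ih 1).2.2]
        exact ⟨rfl, rfl, rfl⟩
      | k + 1 =>
        rw [hA k, hA' k, hB k, hB' k, hC k, hC' k]
        simp only [map_add, coeff_succ_X_mul]
        rw [(ih k).1, (ih (k + 2)).2.1, (ih (k + 2)).2.2]
        exact ⟨rfl, rfl, rfl⟩
  intro k
  ext n
  exact (key n k).2.1

section ClosedForms

variable (P W : PowerSeries ℚ)

def Bcf (m : ℕ) : PowerSeries ℚ :=
  XX ^ m * (3 - 3 * XX ^ 2 - W) * (2 * P ^ (m + 1))⁻¹

def Gcf (m : ℕ) : PowerSeries ℚ :=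
  XX ^ (m + 2) * (3 - 3 * XX ^ 2 - W) * (2 * P ^ (m + 1) * (P - XX ^ 2))⁻¹

def Ccf (m : ℕ) : PowerSeries ℚ := (if m = 0 then 1 else 0) + Gcf P W m

def Acf (m : ℕ) : PowerSeries ℚ := Bcf P W m - XX * Gcf P W (m + 1)

variable {P W}
variable (hW0 : PowerSeries.constantCoeff W = 1)
    (hW : W ^ 2 = 1 - 6 * PowerSeries.X ^ 2 + 5 * PowerSeries.X ^ 4)
    (hP : 2 * P = 1 + PowerSeries.X ^ 2 + W)

include hW0 hP in
lemma hP0 : PowerSeries.constantCoeff P = 1 := by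
  have h := congrArg (PowerSeries.constantCoeff) hP
  simp [hW0, map_ofNat] at h
  linarith

include hW0 hP in
lemma h2ne (m : ℕ) : PowerSeries.constantCoeff (2 * P ^ (m + 1)) ≠ 0 := by
  simp [hP0 hW0 hP, map_ofNat]

include hW0 hP in
lemma hMne' (m : ℕ) : PowerSeries.constantCoeff (2 * P ^ (m + 1) * (P - XX ^ 2)) ≠ 0 := by
  simp [hP0 hW0 hP, map_ofNat]

include hW0 hP in
lemma hMne (m : ℕ) : (2 * P ^ (m + 1) * (P - XX ^ 2) : PowerSeries ℚ) ≠ 0 := by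
  intro h
  exact hMne' hW0 hP m (by rw [h]; simp)

include hW0 hP in
lemma hB (m : ℕ) : Bcf P W m * (2 * P ^ (m + 1)) = XX ^ m * (3 - 3 * XX ^ 2 - W) := by
  rw [Bcf, mul_assoc, PowerSeries.inv_mul_cancel _ (h2ne hW0 hP m), mul_one]

include hW0 hP in
lemma hG (m : ℕ) :
    Gcf P W m * (2 * P ^ (m + 1) * (P - XX ^ 2)) = XX ^ (m + 2) * (3 - 3 * XX ^ 2 - W) := by
  rw [Gcf, mul_assoc, PowerSeries.inv_mul_cancel _ (hMne' hW0 hP m), mul_one]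

include hP in
lemma hc : (3 - 3 * XX ^ 2 - W : PowerSeries ℚ) = 4 - 2 * XX ^ 2 - 2 * P := by
  linear_combination hP

include hW hP in
lemma hP2 : P ^ 2 = (1 + XX ^ 2) * P - 2 * XX ^ 2 + XX ^ 4 := by
  have hne4 : (4 : PowerSeries ℚ) ≠ 0 := fun h => by
    simpa [map_ofNat] using congrArg (PowerSeries.constantCoeff) h
  have h4P : 4 * P ^ 2 = 4 * ((1 + XX ^ 2) * P - 2 * XX ^ 2 + XX ^ 4) := by
    linear_combination hW + (2 * P - 1 - XX ^ 2 + W) * hP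
  exact mul_left_cancel₀ hne4 h4P

include hW0 hP in
lemma hGrec (m : ℕ) : Gcf P W m = XX * (Bcf P W (m + 1) + Gcf P W (m + 1)) := by
  apply mul_right_cancel₀ (hMne hW0 hP (m + 1))
  linear_combination P * hG hW0 hP m - (XX * (P - XX ^ 2)) * hB hW0 hP (m + 1) -
    XX * hG hW0 hP (m + 1)

include hW0 hW hP in
lemma hB0G : Bcf P W 0 = 1 + XX * (Bcf P W 1 + Gcf P W 1) := by
  apply mul_right_cancel₀ (hMne hW0 hP 1)
  linear_combination (P * (P - XX ^ 2)) * hB hW0 hP 0 - (XX * (P - XX ^ 2)) * hB hW0 hP 1 -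
    XX * hG hW0 hP 1 + (P ^ 2 - 2 * XX ^ 2 * P) * hc hP - (4 * P) * hP2 hW hP

include hW0 hW hP in
lemma hBrecG (k : ℕ) :
    Bcf P W (k + 1) = XX * ((Bcf P W k - XX * Gcf P W (k + 1)) + Bcf P W (k + 2)
      + Gcf P W (k + 2)) := by
  apply mul_right_cancel₀ (hMne hW0 hP (k + 2))
  linear_combination (P * (P - XX ^ 2)) * hB hW0 hP (k + 1) -
    (XX * P ^ 2 * (P - XX ^ 2)) * hB hW0 hP k + (XX ^ 2 * P) * hG hW0 hP (k + 1) -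
    (XX * (P - XX ^ 2)) * hB hW0 hP (k + 2) - XX * hG hW0 hP (k + 2) -
    (XX ^ (k + 1) * (3 - 3 * XX ^ 2 - W) * P) * hP2 hW hP

include hW0 hW hP in
lemma cfA0 : Acf P W 0 = 1 + XX * Bcf P W 1 := by
  rw [Acf]
  linear_combination hB0G hW0 hW hP

include hW0 hW hP in
lemma cfA (k : ℕ) : Acf P W (k + 1) = XX * (Acf P W k + Bcf P W (k + 2)) := by
  rw [Acf, Acf]
  linear_combination hBrecG hW0 hW hP k

include hW0 hW hP in
lemma cfB0 : Bcf P W 0 = 1 + XX * (Bcf P W 1 + Ccf P W 1) := by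
  have e1 : Ccf P W 1 = Gcf P W 1 := by simp [Ccf]
  rw [e1]
  exact hB0G hW0 hW hP

include hW0 hW hP in
lemma cfB (k : ℕ) :
    Bcf P W (k + 1) = XX * (Acf P W k + Bcf P W (k + 2) + Ccf P W (k + 2)) := by
  have e1 : Ccf P W (k + 2) = Gcf P W (k + 2) := by simp [Ccf]
  rw [e1, Acf]
  exact hBrecG hW0 hW hP k

include hW0 hP in
lemma cfC0 : Ccf P W 0 = 1 + XX * (Bcf P W 1 + Ccf P W 1) := by
  have e1 : Ccf P W 1 = Gcf P W 1 := by simp [Ccf]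
  have e0 : Ccf P W 0 = 1 + Gcf P W 0 := by simp [Ccf]
  rw [e1, e0]
  linear_combination hGrec hW0 hP 0

include hW0 hP in
lemma cfC (k : ℕ) : Ccf P W (k + 1) = XX * (Bcf P W (k + 2) + Ccf P W (k + 2)) := by
  have e1 : Ccf P W (k + 1) = Gcf P W (k + 1) := by simp [Ccf]
  have e2 : Ccf P W (k + 2) = Gcf P W (k + 2) := by simp [Ccf]
  rw [e1, e2]
  exact hGrec hW0 hP (k + 1)

end ClosedForms

end SkewAux

namespace SkewAux

open PowerSeries

local notation "XX" => (PowerSeries.X : PowerSeries ℚ)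

def Aco (m : ℕ) : PowerSeries ℚ := PowerSeries.mk fun n => (aN n m : ℚ)
def Bco (m : ℕ) : PowerSeries ℚ := PowerSeries.mk fun n => (bN n m : ℚ)
def Cco (m : ℕ) : PowerSeries ℚ := PowerSeries.mk fun n => (cN n m : ℚ)

lemma coA0 : Aco 0 = 1 + XX * Bco 1 := by
  ext n
  cases n with
  | zero =>
    simp [Aco, Bco, aN_zero, coeff_zero_eq_constantCoeff]
  | succ n =>
    simp only [Aco, Bco, coeff_mk, map_add, coeff_succ_X_mul, coeff_one,
      Nat.succ_ne_zero, if_false]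
    rw [aN_succ0]
    push_cast
    ring

lemma coA (k : ℕ) : Aco (k + 1) = XX * (Aco k + Bco (k + 2)) := by
  ext n
  cases n with
  | zero =>
    simp [Aco, Bco, aN_zero, coeff_zero_eq_constantCoeff]
  | succ n =>
    simp only [Aco, Bco, coeff_mk, map_add, coeff_succ_X_mul]
    rw [aN_succ]
    push_cast
    ring

lemma coB0 : Bco 0 = 1 + XX * (Bco 1 + Cco 1) := by
  ext n
  cases n with
  | zero =>
    simp [Bco, Cco, bN_zero, coeff_zero_eq_constantCoeff]
  | succ n =>
    simp only [Bco, Cco, coeff_mk, map_add, coeff_succ_X_mul, coeff_one,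
      Nat.succ_ne_zero, if_false]
    rw [bN_succ0]
    push_cast
    ring

lemma coB (k : ℕ) : Bco (k + 1) = XX * (Aco k + Bco (k + 2) + Cco (k + 2)) := by
  ext n
  cases n with
  | zero =>
    simp [Aco, Bco, Cco, bN_zero, coeff_zero_eq_constantCoeff]
  | succ n =>
    simp only [Aco, Bco, Cco, coeff_mk, map_add, coeff_succ_X_mul]
    rw [bN_succ]
    push_cast
    ring

lemma coC0 : Cco 0 = 1 + XX * (Bco 1 + Cco 1) := by
  ext n
  cases n with
  | zero =>
    simp [Bco, Cco, cN_zero, coeff_zero_eq_constantCoeff]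
  | succ n =>
    simp only [Bco, Cco, coeff_mk, map_add, coeff_succ_X_mul, coeff_one,
      Nat.succ_ne_zero, if_false]
    rw [cN_succ]
    push_cast
    ring

lemma coC (k : ℕ) : Cco (k + 1) = XX * (Bco (k + 2) + Cco (k + 2)) := by
  ext n
  cases n with
  | zero =>
    simp [Bco, Cco, cN_zero, coeff_zero_eq_constantCoeff]
  | succ n =>
    simp only [Bco, Cco, coeff_mk, map_add, coeff_succ_X_mul]
    rw [cN_succ]
    push_cast
    ring

end SkewAux

/-- with `W` the power series with constant coefficient 1 satisfying
`W² = 1 - 6z² + 5z⁴`, and `P = (1 + z² + W)/2`, the generating function of decorated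
partial Dyck paths with final height `j` equals `z^j (3 - 3z² - W)/(2 P^{j+1})`. -/
theorem skew_dyck_partial_gf (W : PowerSeries ℚ)
    (hW0 : PowerSeries.constantCoeff W = 1)
    (hW : W ^ 2 = 1 - 6 * PowerSeries.X ^ 2 + 5 * PowerSeries.X ^ 4)
    (P : PowerSeries ℚ)
    (hP : 2 * P = 1 + PowerSeries.X ^ 2 + W)
    (j : ℕ) :
    PowerSeries.mk (fun n => (decCount n j : ℚ)) =
      PowerSeries.X ^ j * (3 - 3 * PowerSeries.X ^ 2 - W) * (2 * P ^ (j + 1))⁻¹ := by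

  open SkewAux in
  have main := system_unique Aco Bco Cco (Acf P W) (Bcf P W) (Ccf P W)
    coA0 coA coB0 coB coC0 coC
    (cfA0 hW0 hW hP) (cfA hW0 hW hP) (cfB0 hW0 hW hP) (cfB hW0 hW hP)
    (cfC0 hW0 hP) (cfC hW0 hP) j
  have lhs_eq : PowerSeries.mk (fun n => (decCount n j : ℚ)) = SkewAux.Bco j := by
    ext n
    simp [SkewAux.Bco, SkewAux.decCount_eq]
  rw [lhs_eq, main, SkewAux.Bcf]
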